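/- arXiv:1801.00141 — 7 statements merged into one kernel-verified Lean document; each statement's English description precedes it below -/
import Mathlib

section
/- Let p be a random variable on [0,1] with a density f that is nondecreasing on (0,1). Then for all 0 ≤ γ ≤ λ ≤ 1 with P(p ≤ λ) > 0, P(p < γ | p ≤ λ) ≤ γ/λ. -/
set_option autoImplicit false

open MeasureTheory

/-- If `p` is a `[0,1]`-valued random variable with a density `f`
(w.r.t. Lebesgue measure) that is nondecreasing on `(0,1)`, i.e.
`P(p ≤ t) = ∫_0^t f(x) dx` for `t ∈ [0,1]`, then for all `0 ≤ γ ≤ lam ≤ 1`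
with `P(p ≤ lam) > 0`, `P(p < γ) / P(p ≤ lam) ≤ γ / lam`. -/
theorem supraUniform_of_monotone_density
    {Ω : Type*} [MeasurableSpace Ω] (μ : Measure Ω) [IsProbabilityMeasure μ]
    (p : Ω → ℝ) (hmeas : Measurable p) (hrange : ∀ ω, p ω ∈ Set.Icc (0 : ℝ) 1)
    (f : ℝ → ℝ) (hf_nonneg : ∀ x, 0 ≤ f x) (hf_int : IntegrableOn f (Set.Icc 0 1))
    (hf_mono : MonotoneOn f (Set.Ioo (0 : ℝ) 1))
    (hdens : ∀ t ∈ Set.Icc (0 : ℝ) 1,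
      (μ {ω | p ω ≤ t}).toReal = ∫ x in Set.Ioc (0 : ℝ) t, f x) :
    ∀ γ lam : ℝ, 0 ≤ γ → γ ≤ lam → lam ≤ 1 →
      0 < (μ {ω | p ω ≤ lam}).toReal →
      (μ {ω | p ω < γ}).toReal / (μ {ω | p ω ≤ lam}).toReal ≤ γ / lam := by
  intro γ lam hγ hγlam hlam1 hpos
  have hγ1 : γ ≤ 1 := le_trans hγlam hlam1
  have hlam0 : 0 < lam := by
    rcases lt_or_eq_of_le (le_trans hγ hγlam) with h | h
    · exact h
    · exfalso
      have h0 := hdens 0 (by simp)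
      rw [← h] at hpos
      simp at h0
      linarith
  have hint : ∀ a b : ℝ, 0 ≤ a → b ≤ 1 → IntegrableOn f (Set.Ioc a b) := by
    intro a b ha hb
    exact hf_int.mono_set (fun x hx => ⟨le_trans ha (le_of_lt hx.1), le_trans hx.2 hb⟩)
  have hkey : lam * (∫ x in Set.Ioc (0:ℝ) γ, f x) ≤ γ * (∫ x in Set.Ioc (0:ℝ) lam, f x) := by
    rcases eq_or_lt_of_le hγ with hγ0 | hγ0
    · simp [← hγ0]
    · rcases eq_or_lt_of_le hγlam with heq | hlt
      · rw [heq]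
      · have hγmem : γ ∈ Set.Ioo (0:ℝ) 1 := ⟨hγ0, lt_of_lt_of_le hlt hlam1⟩
        set c := f γ with hc
        have h1 : (∫ x in Set.Ioc (0:ℝ) γ, f x) ≤ γ * c := by
          have := setIntegral_mono_on (hint 0 γ le_rfl hγ1)
            (integrableOn_const (by simp))
            measurableSet_Ioc
            (fun x hx => hf_mono ⟨hx.1, lt_of_le_of_lt hx.2 hγmem.2⟩ hγmem hx.2)
          simpa [Real.volume_Ioc, smul_eq_mul, mul_comm, ENNReal.toReal_ofReal hγ, max_eq_left hγ, hc] using this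
        have h2 : (lam - γ) * c ≤ ∫ x in Set.Ioc γ lam, f x := by
          rw [integral_Ioc_eq_integral_Ioo]
          have := setIntegral_mono_on
            (integrableOn_const (by simp))
            ((hint γ lam hγ hlam1).mono_set Set.Ioo_subset_Ioc_self)
            measurableSet_Ioo
            (fun x hx => hf_mono hγmem ⟨lt_trans hγ0 hx.1, lt_of_lt_of_le hx.2 hlam1⟩ hx.1.le)
          simpa [Real.volume_Ioo, smul_eq_mul, mul_comm,
            ENNReal.toReal_ofReal (sub_nonneg.2 hγlam), max_eq_left (sub_nonneg.2 hγlam), hc] using this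
        have h3 : (∫ x in Set.Ioc (0:ℝ) lam, f x)
            = (∫ x in Set.Ioc (0:ℝ) γ, f x) + ∫ x in Set.Ioc γ lam, f x := by
          rw [← Set.Ioc_union_Ioc_eq_Ioc hγ hγlam,
            setIntegral_union (Set.Ioc_disjoint_Ioc_of_le le_rfl) measurableSet_Ioc
              (hint 0 γ le_rfl hγ1) (hint γ lam hγ hlam1)]
        have hc0 : 0 ≤ c := hf_nonneg γ
        nlinarith [hγ0, hlt]
  have hsub : (μ {ω | p ω < γ}).toReal ≤ ∫ x in Set.Ioc (0:ℝ) γ, f x := by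
    rw [← hdens γ ⟨hγ, hγ1⟩]
    exact ENNReal.toReal_mono (measure_ne_top μ _)
      (measure_mono (fun ω hω => show p ω ≤ γ from le_of_lt hω))
  have hFlam : (μ {ω | p ω ≤ lam}).toReal = ∫ x in Set.Ioc (0:ℝ) lam, f x :=
    hdens lam ⟨le_trans hγ hγlam, hlam1⟩
  rw [hFlam] at hpos ⊢
  rw [div_le_div_iff₀ hpos hlam0]
  nlinarith [hsub, hkey, hlam0]
end

section
/- Let p_1, p_2, ..., be supra-uniform [0,1]-valued random variables. Suppose R_m/m converges in probability to η > 0 and E[R_m/m] converges to η as m → ∞, where R_m = Σ_{i=1}^m 1{p_i ≤ λ}. Then limsup_{m→∞} P(∪_{i=1}^m {p_i < αλ/max(R_m,1)}) ≤ α. -/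
set_option autoImplicit false

open MeasureTheory Filter

/-- A `[0,1]`-valued random variable `p` is supra-uniform if
`P(p < γ | p ≤ lam') ≤ γ/lam'` for all `0 ≤ γ ≤ lam' ≤ 1` with `P(p ≤ lam') > 0`. -/
def SupraUniform {Ω : Type*} [MeasurableSpace Ω] (μ : Measure Ω) (p : Ω → ℝ) : Prop :=
  ∀ γ lam : ℝ, 0 ≤ γ → γ ≤ lam → lam ≤ 1 →
    0 < (μ {ω | p ω ≤ lam}).toReal →
    (μ ({ω | p ω < γ} ∩ {ω | p ω ≤ lam})).toReal / (μ {ω | p ω ≤ lam}).toReal ≤ γ / lam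

/-- asymptotic FWER control of the CBP: let `p₁, p₂, …` be
supra-uniform `[0,1]`-valued random variables, and `R m = ∑_{i<m} 1{p_i ≤ lam}`.
If `R m / m → η > 0` in probability and `E[R m / m] → η`, then
`limsup_m P(⋃_{i<m} {p_i < α lam / max(R_m,1)}) ≤ α`. -/
theorem cbp_fwer_asymptotic
    {Ω : Type*} [MeasurableSpace Ω] (μ : Measure Ω) [IsProbabilityMeasure μ]
    (p : ℕ → Ω → ℝ) (hmeas : ∀ i, Measurable (p i))
    (hrange : ∀ i ω, p i ω ∈ Set.Icc (0 : ℝ) 1)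
    (hsu : ∀ i, SupraUniform μ (p i))
    (lam α : ℝ) (hlam : lam ∈ Set.Ioc (0 : ℝ) 1) (hα : α ∈ Set.Ioo (0 : ℝ) 1)
    (R : ℕ → Ω → ℝ)
    (hR : ∀ m ω, R m ω = ∑ i ∈ Finset.range m, (if p i ω ≤ lam then (1 : ℝ) else 0))
    (η : ℝ) (hη : 0 < η)
    (hprob : ∀ ε : ℝ, 0 < ε →
      Tendsto (fun m : ℕ => (μ {ω | ε ≤ |R m ω / m - η|}).toReal) atTop (nhds 0))
    (hexp : Tendsto (fun m : ℕ => ∫ ω, R m ω / m ∂μ) atTop (nhds η)) :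
    limsup (fun m : ℕ =>
        (μ {ω | ∃ i < m, p i ω < α * lam / max (R m ω) 1}).toReal) atTop ≤ α := by
  obtain ⟨hlam0, hlam1⟩ := hlam
  obtain ⟨hα0, hα1⟩ := hα
  set S : ℕ → Set Ω := fun i => {ω | p i ω ≤ lam} with hSdef
  have hSmeas : ∀ i, MeasurableSet (S i) := fun i => measurableSet_le (hmeas i) measurable_const
  -- per-index supra-uniform bound
  have key : ∀ (i : ℕ) (γ : ℝ), 0 ≤ γ → γ ≤ lam →
      (μ ({ω | p i ω < γ} ∩ S i)).toReal ≤ γ / lam * (μ (S i)).toReal := by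
    intro i γ hγ0 hgl
    by_cases hpos : 0 < (μ (S i)).toReal
    · have h := hsu i γ lam hγ0 hgl hlam1 hpos
      exact (div_le_iff₀ hpos).mp h
    · have h0 : (μ (S i)).toReal = 0 :=
        le_antisymm (not_lt.mp hpos) ENNReal.toReal_nonneg
      have hz : μ (S i) = 0 := by
        rcases (ENNReal.toReal_eq_zero_iff _).mp h0 with h | h
        · exact h
        · exact absurd h (measure_ne_top μ _)
      have h1 : μ ({ω | p i ω < γ} ∩ S i) = 0 :=
        measure_mono_null Set.inter_subset_right hz
      simp [h1, h0]
  -- indicator rewrite and integral identity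
  have hind : ∀ i, (fun ω => if p i ω ≤ lam then (1:ℝ) else 0)
      = (S i).indicator (fun _ => (1:ℝ)) := by
    intro i; ext ω
    by_cases h : p i ω ≤ lam
    · simp [Set.indicator_apply, hSdef, h]
    · simp [Set.indicator_apply, hSdef, h]
  have hInt : ∀ i, Integrable (fun ω => if p i ω ≤ lam then (1:ℝ) else 0) μ := by
    intro i; rw [hind i]
    exact (integrable_const (1:ℝ)).indicator (hSmeas i)
  have hint : ∀ i, ∫ ω, (if p i ω ≤ lam then (1:ℝ) else 0) ∂μ = (μ (S i)).toReal := by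
    intro i; rw [hind i, integral_indicator_const (1:ℝ) (hSmeas i)]; simp; rfl
  have hI : ∀ m : ℕ, ∫ ω, R m ω / m ∂μ
      = (∑ i ∈ Finset.range m, (μ (S i)).toReal) / m := by
    intro m
    have : (fun ω => R m ω / m)
        = fun ω => (∑ i ∈ Finset.range m, if p i ω ≤ lam then (1:ℝ) else 0) / m :=
      funext fun ω => by rw [hR]
    rw [this, integral_div, integral_finset_sum _ (fun i _ => hInt i)]
    congr 1
    exact Finset.sum_congr rfl fun i _ => hint i
  -- main argument
  refine le_of_forall_gt_imp_ge_of_dense ?_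
  intro c hc
  have hc0 : (0:ℝ) < c := lt_trans hα0 hc
  set ε := η * (c - α) / c with hεdef
  have hεpos : 0 < ε := by
    apply div_pos (mul_pos hη (by linarith)) hc0
  set d := η * α / c with hddef
  have hdpos : 0 < d := div_pos (mul_pos hη hα0) hc0
  have hηε : η - ε = d := by
    rw [hεdef, hddef]; field_simp; ring
  obtain ⟨N, hN⟩ := exists_nat_ge (α / d)
  have hbound : ∀ᶠ m in atTop,
      (μ {ω | ∃ i < m, p i ω < α * lam / max (R m ω) 1}).toReal
      ≤ (μ {ω | ε ≤ |R m ω / m - η|}).toReal + (α / d) * ∫ ω, R m ω / m ∂μ := by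
    filter_upwards [eventually_ge_atTop (max N 1)] with m hm
    have hm1 : (1:ℕ) ≤ m := le_trans (le_max_right _ _) hm
    have hmR : (0:ℝ) < m := by exact_mod_cast hm1
    have hmN : (N:ℝ) ≤ m := Nat.cast_le.mpr (le_trans (le_max_left _ _) hm)
    have hdm : α ≤ d * m := by
      have h1 : α / d ≤ (m:ℝ) := le_trans hN hmN
      calc α = d * (α / d) := by field_simp
        _ ≤ d * m := by gcongr
    have hdm0 : (0:ℝ) < d * m := mul_pos hdpos hmR
    set γm := α * lam / (d * m) with hγmdef
    have hγm0 : 0 ≤ γm := by positivity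
    have hgml : γm ≤ lam := by
      rw [hγmdef, div_le_iff₀ hdm0]
      nlinarith
    set B := {ω | ε ≤ |R m ω / m - η|} with hBdef
    set U := ⋃ i ∈ Finset.range m, ({ω | p i ω < γm} ∩ S i) with hUdef
    have hsub : {ω | ∃ i < m, p i ω < α * lam / max (R m ω) 1} ⊆ B ∪ U := by
      intro ω hω
      obtain ⟨i, him, hpi⟩ := hω
      by_cases hB : ω ∈ B
      · exact Or.inl hB
      · right
        have habs : |R m ω / m - η| < ε := lt_of_not_ge (by simpa [hBdef] using hB)
        have h2 : η - ε < R m ω / m := by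
          have := (abs_lt.mp habs).1; linarith
        have hRlow : d * m < R m ω := by
          calc d * m = (η - ε) * m := by rw [hηε]
            _ < (R m ω / m) * m := by exact mul_lt_mul_of_pos_right h2 hmR
            _ = R m ω := div_mul_cancel₀ _ (ne_of_gt hmR)
        have hmax : d * m ≤ max (R m ω) 1 := le_trans hRlow.le (le_max_left _ _)
        have hmaxpos : (0:ℝ) < max (R m ω) 1 := lt_of_lt_of_le hdm0 hmax
        have hle : α * lam / max (R m ω) 1 ≤ γm := by
          rw [hγmdef]
          gcongr
        have hpiγ : p i ω < γm := lt_of_lt_of_le hpi hle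
        have hpil : p i ω ≤ lam := by
          have h1 : α * lam / max (R m ω) 1 ≤ α * lam :=
            div_le_self (mul_nonneg hα0.le hlam0.le) (le_max_right _ _)
          have h3 : α * lam ≤ lam := by nlinarith
          exact le_of_lt (lt_of_lt_of_le hpi (le_trans h1 h3))
        exact Set.mem_biUnion (Finset.mem_range.mpr him) ⟨hpiγ, hpil⟩
    have hU : (μ U).toReal ≤ ∑ i ∈ Finset.range m, γm / lam * (μ (S i)).toReal := by
      calc (μ U).toReal
          ≤ (∑ i ∈ Finset.range m, μ ({ω | p i ω < γm} ∩ S i)).toReal := by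
            apply ENNReal.toReal_mono
            · exact (ENNReal.sum_lt_top.mpr fun i _ => measure_lt_top μ _).ne
            · exact measure_biUnion_finset_le _ _
        _ = ∑ i ∈ Finset.range m, (μ ({ω | p i ω < γm} ∩ S i)).toReal :=
            ENNReal.toReal_sum fun i _ => measure_ne_top μ _
        _ ≤ ∑ i ∈ Finset.range m, γm / lam * (μ (S i)).toReal :=
            Finset.sum_le_sum fun i _ => key i γm hγm0 hgml
    have hsum : ∑ i ∈ Finset.range m, γm / lam * (μ (S i)).toReal
        = (α / d) * ∫ ω, R m ω / m ∂μ := by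
      rw [hI m, ← Finset.mul_sum]
      have hγl : γm / lam = α / (d * m) := by
        rw [hγmdef]
        field_simp
      rw [hγl]
      first
        | (field_simp; ring)
        | field_simp
    calc (μ {ω | ∃ i < m, p i ω < α * lam / max (R m ω) 1}).toReal
        ≤ (μ (B ∪ U)).toReal :=
          ENNReal.toReal_mono (measure_ne_top μ _) (measure_mono hsub)
      _ ≤ (μ B).toReal + (μ U).toReal := by
          rw [← ENNReal.toReal_add (measure_ne_top μ _) (measure_ne_top μ _)]
          exact ENNReal.toReal_mono
            (ENNReal.add_ne_top.mpr ⟨measure_ne_top μ _, measure_ne_top μ _⟩)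
            (measure_union_le _ _)
      _ ≤ (μ B).toReal + (α / d) * ∫ ω, R m ω / m ∂μ := by
          rw [← hsum]; exact add_le_add_right hU _
  have hlimc : (0:ℝ) + (α / d) * η = c := by
    rw [hddef]; field_simp; ring
  have ht : Tendsto (fun m : ℕ =>
      (μ {ω | ε ≤ |R m ω / m - η|}).toReal + (α / d) * ∫ ω, R m ω / m ∂μ)
      atTop (nhds c) := by
    rw [← hlimc]
    exact (hprob ε hεpos).add (hexp.const_mul (α / d))
  calc limsup (fun m : ℕ =>
        (μ {ω | ∃ i < m, p i ω < α * lam / max (R m ω) 1}).toReal) atTop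
      ≤ limsup (fun m : ℕ =>
        (μ {ω | ε ≤ |R m ω / m - η|}).toReal + (α / d) * ∫ ω, R m ω / m ∂μ) atTop := by
        exact limsup_le_limsup hbound
          (isCoboundedUnder_le_of_le atTop fun m => ENNReal.toReal_nonneg)
          ht.isBoundedUnder_le
    _ = c := ht.limsup_eq
end

section
/- Let p_1, ..., p_m be supra-uniform [0,1]-valued random variables, λ ∈ (0,1], α ∈ (0,1), and let R = Σ_{i=1}^m 1{p_i ≤ λ} with E[R] > 0. Then the procedure rejecting hypothesis i when p_i < αλ/E[R] controls the FWER: P(∪_{i=1}^m {p_i < αλ/E[R]}) ≤ α. -/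
set_option autoImplicit false

open MeasureTheory Finset

/-- let `p₁,…,p_m` be supra-uniform `[0,1]`-valued random
variables, `lam ∈ (0,1]`, `α ∈ (0,1)`, `R = ∑ 1{p_i ≤ lam}` with `E[R] > 0`
(and the rejection threshold `α lam / E[R]` at most `lam`). Then the procedure
rejecting `H_i` when `p_i < α lam / E[R]` controls the FWER at level `α`. -/
theorem oracle_conditionalized_bonferroni_fwer
    {Ω : Type*} [MeasurableSpace Ω] (μ : Measure Ω) [IsProbabilityMeasure μ]
    (m : ℕ) (p : Fin m → Ω → ℝ) (hmeas : ∀ i, Measurable (p i))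
    (hrange : ∀ i ω, p i ω ∈ Set.Icc (0 : ℝ) 1)
    (hsu : ∀ i, SupraUniform μ (p i))
    (lam α : ℝ) (hlam : lam ∈ Set.Ioc (0 : ℝ) 1) (hα : α ∈ Set.Ioo (0 : ℝ) 1)
    (R : Ω → ℝ)
    (hR : ∀ ω, R ω = ∑ i, (if p i ω ≤ lam then (1 : ℝ) else 0))
    (ER : ℝ) (hER : ER = ∫ ω, R ω ∂μ) (hERpos : 0 < ER)
    (hthresh : α * lam / ER ≤ lam) :
    (μ {ω | ∃ i, p i ω < α * lam / ER}).toReal ≤ α := by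
  set t := α * lam / ER with ht
  have htpos : 0 < t := div_pos (mul_pos hα.1 hlam.1) hERpos
  -- ER = sum of measures
  have hMeasSet : ∀ i : Fin m, MeasurableSet {ω | p i ω ≤ lam} :=
    fun i => measurableSet_le (hmeas i) measurable_const
  have hERsum : ER = ∑ i, (μ {ω | p i ω ≤ lam}).toReal := by
    rw [hER]
    have : ∀ ω, R ω = ∑ i, Set.indicator {ω | p i ω ≤ lam} (fun _ => (1:ℝ)) ω := by
      intro ω
      rw [hR ω]
      refine Finset.sum_congr rfl fun i _ => ?_
      simp [Set.indicator_apply, Set.mem_setOf_eq]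
    rw [integral_congr_ae (Filter.Eventually.of_forall this)]
    rw [integral_finset_sum _ (fun i _ =>
      (integrable_const (1:ℝ)).indicator (hMeasSet i))]
    refine Finset.sum_congr rfl fun i _ => ?_
    rw [integral_indicator (hMeasSet i)]
    simp
    rfl
  -- union bound
  have hUnion : {ω | ∃ i, p i ω < t} = ⋃ i, {ω | p i ω < t} := by
    ext ω; simp
  have hsub : ∀ i : Fin m, {ω | p i ω < t} ⊆ {ω | p i ω ≤ lam} :=
    fun i ω hω => le_trans (le_of_lt hω) hthresh
  have hle1 : (μ {ω | ∃ i, p i ω < t}).toReal ≤ ∑ i, (μ {ω | p i ω < t}).toReal := by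
    rw [hUnion]
    have h1 : μ (⋃ i, {ω | p i ω < t}) ≤ ∑ i, μ {ω | p i ω < t} :=
      measure_iUnion_fintype_le _ _
    have h2 := ENNReal.toReal_mono (by
      refine (ENNReal.sum_lt_top.2 fun i _ => ?_).ne
      exact measure_lt_top μ _) h1
    rwa [ENNReal.toReal_sum (fun i _ => (measure_lt_top μ _).ne)] at h2
  -- per-i bound
  have hle2 : ∀ i : Fin m, (μ {ω | p i ω < t}).toReal ≤
      t / lam * (μ {ω | p i ω ≤ lam}).toReal := by
    intro i
    have hinter : {ω | p i ω < t} ∩ {ω | p i ω ≤ lam} = {ω | p i ω < t} :=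
      Set.inter_eq_left.2 (hsub i)
    by_cases hpos : 0 < (μ {ω | p i ω ≤ lam}).toReal
    · have := hsu i t lam htpos.le hthresh hlam.2 hpos
      rw [hinter] at this
      calc (μ {ω | p i ω < t}).toReal
          = (μ {ω | p i ω < t}).toReal / (μ {ω | p i ω ≤ lam}).toReal
            * (μ {ω | p i ω ≤ lam}).toReal := by
            field_simp
        _ ≤ t / lam * (μ {ω | p i ω ≤ lam}).toReal :=
            mul_le_mul_of_nonneg_right this hpos.le
    · have h0 : (μ {ω | p i ω ≤ lam}).toReal = 0 :=
        le_antisymm (not_lt.1 hpos) ENNReal.toReal_nonneg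
      have : (μ {ω | p i ω < t}).toReal ≤ (μ {ω | p i ω ≤ lam}).toReal :=
        ENNReal.toReal_mono (measure_lt_top μ _).ne (measure_mono (hsub i))
      rw [h0] at this
      rw [h0, mul_zero]
      exact this
  calc (μ {ω | ∃ i, p i ω < t}).toReal
      ≤ ∑ i, (μ {ω | p i ω < t}).toReal := hle1
    _ ≤ ∑ i, t / lam * (μ {ω | p i ω ≤ lam}).toReal :=
        Finset.sum_le_sum fun i _ => hle2 i
    _ = t / lam * ER := by rw [← Finset.mul_sum, ← hERsum]
    _ = α := by
        rw [ht]
        have h1 : lam ≠ 0 := hlam.1.ne'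
        have h2 : ER ≠ 0 := hERpos.ne'
        field_simp
end

section
/- Let (p_1, p_2) be a pair of [0,1]-valued random variables, each marginally Uniform[0,1], such that X_1 = Φ^{-1}(1-p_1) and X_2 = Φ^{-1}(1-p_2) are positive quadrant dependent. If α, λ ∈ (0,1) satisfy 1 - (1 - λα/2)^2 + 2(1-λ)λα ≤ α, then the FWER of the conditionalized Bonferroni procedure is at most α. -/
set_option autoImplicit false

open MeasureTheory

lemma cbp_helper {Ω : Type*} [MeasurableSpace Ω] (μ : Measure Ω) [IsFiniteMeasure μ]
    {s t u : Set Ω} (ht : MeasurableSet t)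
    (hd : Disjoint s t) (hsub : s ∪ t ⊆ u) :
    (μ s).toReal + (μ t).toReal ≤ (μ u).toReal := by
  rw [← ENNReal.toReal_add (measure_ne_top μ s) (measure_ne_top μ t),
      ← measure_union hd ht]
  exact ENNReal.toReal_mono (measure_ne_top μ u) (measure_mono hsub)

/-- let `(p₁, p₂)` be marginally Uniform[0,1] and positively
quadrant dependent (equivalently, `X_i = Φ⁻¹(1-p_i)` are PQD):
`P(p₁ ≤ s, p₂ ≤ t) ≥ s t` and `P(p₁ > s, p₂ > t) ≥ (1-s)(1-t)` for
`s, t ∈ [0,1]`. If `α, lam ∈ (0,1)` satisfy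
`1 - (1 - lam α/2)² + 2(1-lam) lam α ≤ α`, then the FWER of the
conditionalized Bonferroni procedure is at most `α`. -/
theorem cbp_fwer_bivariate_pqd
    {Ω : Type*} [MeasurableSpace Ω] (μ : Measure Ω) [IsProbabilityMeasure μ]
    (p₁ p₂ : Ω → ℝ) (hm₁ : Measurable p₁) (hm₂ : Measurable p₂)
    (hunif₁ : ∀ t ∈ Set.Icc (0 : ℝ) 1, (μ {ω | p₁ ω ≤ t}).toReal = t)
    (hunif₂ : ∀ t ∈ Set.Icc (0 : ℝ) 1, (μ {ω | p₂ ω ≤ t}).toReal = t)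
    (hpqd : ∀ s ∈ Set.Icc (0 : ℝ) 1, ∀ t ∈ Set.Icc (0 : ℝ) 1,
      s * t ≤ (μ {ω | p₁ ω ≤ s ∧ p₂ ω ≤ t}).toReal)
    (hpqd' : ∀ s ∈ Set.Icc (0 : ℝ) 1, ∀ t ∈ Set.Icc (0 : ℝ) 1,
      (1 - s) * (1 - t) ≤ (μ {ω | s < p₁ ω ∧ t < p₂ ω}).toReal)
    (lam α : ℝ) (hlam : lam ∈ Set.Ioo (0 : ℝ) 1) (hα : α ∈ Set.Ioo (0 : ℝ) 1)
    (hcond : 1 - (1 - lam * α / 2)^2 + 2 * (1 - lam) * lam * α ≤ α)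
    (R : Ω → ℝ)
    (hR : ∀ ω, R ω = (if p₁ ω ≤ lam then (1 : ℝ) else 0)
                    + (if p₂ ω ≤ lam then (1 : ℝ) else 0)) :
    (μ {ω | p₁ ω < lam * α / max (R ω) 1 ∨ p₂ ω < lam * α / max (R ω) 1}).toReal
      ≤ α := by
  obtain ⟨hl0, hl1⟩ := hlam
  obtain ⟨ha0, ha1⟩ := hα
  set c := lam * α with hc
  have hc0 : 0 < c := mul_pos hl0 ha0
  have hclam : c < lam := by nlinarith
  have hc1 : c < 1 := hclam.trans hl1
  have ha2 : 0 < c / 2 := by linarith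
  have hca : c / 2 < 1 := by linarith
  -- the three covering sets
  set S1 : Set Ω := {ω | p₁ ω < c / 2 ∨ p₂ ω < c / 2} with hS1
  set S2 : Set Ω := {ω | p₁ ω < c ∧ lam < p₂ ω} with hS2
  set S3 : Set Ω := {ω | lam < p₁ ω ∧ p₂ ω < c} with hS3
  set T1 : Set Ω := {ω | c / 2 < p₁ ω ∧ c / 2 < p₂ ω} with hT1
  set T2 : Set Ω := {ω | c < p₁ ω ∧ lam < p₂ ω} with hT2
  set T3 : Set Ω := {ω | lam < p₁ ω ∧ c < p₂ ω} with hT3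
  have mlt₁ : ∀ r : ℝ, MeasurableSet {ω | p₁ ω < r} := fun r =>
    measurableSet_lt hm₁ measurable_const
  have mgt₁ : ∀ r : ℝ, MeasurableSet {ω | r < p₁ ω} := fun r =>
    measurableSet_lt measurable_const hm₁
  have mlt₂ : ∀ r : ℝ, MeasurableSet {ω | p₂ ω < r} := fun r =>
    measurableSet_lt hm₂ measurable_const
  have mgt₂ : ∀ r : ℝ, MeasurableSet {ω | r < p₂ ω} := fun r =>
    measurableSet_lt measurable_const hm₂
  have mS1 : MeasurableSet S1 := (mlt₁ _).union (mlt₂ _)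
  have mS2 : MeasurableSet S2 := (mlt₁ _).inter (mgt₂ _)
  have mS3 : MeasurableSet S3 := (mgt₁ _).inter (mlt₂ _)
  have mT1 : MeasurableSet T1 := (mgt₁ _).inter (mgt₂ _)
  have mT2 : MeasurableSet T2 := (mgt₁ _).inter (mgt₂ _)
  have mT3 : MeasurableSet T3 := (mgt₁ _).inter (mgt₂ _)
  -- covering inclusion
  have hcov : {ω | p₁ ω < lam * α / max (R ω) 1 ∨ p₂ ω < lam * α / max (R ω) 1}
      ⊆ S1 ∪ S2 ∪ S3 := by
    intro ω hω
    simp only [Set.mem_setOf_eq] at hω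
    rw [hR ω] at hω
    by_cases h1 : p₁ ω ≤ lam <;> by_cases h2 : p₂ ω ≤ lam
    · -- R = 2, threshold c/2
      have : (if p₁ ω ≤ lam then (1:ℝ) else 0) + (if p₂ ω ≤ lam then (1:ℝ) else 0) = 2 := by
        rw [if_pos h1, if_pos h2]; norm_num
      rw [this] at hω
      have hmax : max (2:ℝ) 1 = 2 := by norm_num
      rw [hmax] at hω
      left; left
      exact hω
    · -- R = 1, threshold c, p₂ > lam
      have : (if p₁ ω ≤ lam then (1:ℝ) else 0) + (if p₂ ω ≤ lam then (1:ℝ) else 0) = 1 := by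
        rw [if_pos h1, if_neg h2]; norm_num
      rw [this] at hω
      have hmax : max (1:ℝ) 1 = 1 := by norm_num
      rw [hmax] at hω
      push_neg at h2
      rcases hω with h | h
      · left; right; exact ⟨by simpa [hc] using h, h2⟩
      · exfalso; rw [div_one] at h; linarith
    · -- R = 1, threshold c, p₁ > lam
      have : (if p₁ ω ≤ lam then (1:ℝ) else 0) + (if p₂ ω ≤ lam then (1:ℝ) else 0) = 1 := by
        rw [if_neg h1, if_pos h2]; norm_num
      rw [this] at hω
      have hmax : max (1:ℝ) 1 = 1 := by norm_num
      rw [hmax] at hω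
      push_neg at h1
      rcases hω with h | h
      · exfalso; rw [div_one] at h; linarith
      · right; exact ⟨h1, by simpa [hc] using h⟩
    · -- R = 0
      have : (if p₁ ω ≤ lam then (1:ℝ) else 0) + (if p₂ ω ≤ lam then (1:ℝ) else 0) = 0 := by
        rw [if_neg h1, if_neg h2]; norm_num
      rw [this] at hω
      have hmax : max (0:ℝ) 1 = 1 := by norm_num
      rw [hmax] at hω
      push_neg at h1 h2
      exfalso
      rcases hω with h | h
      · rw [div_one] at h; linarith
      · rw [div_one] at h; linarith
  -- union bound
  have hub : (μ {ω | p₁ ω < lam * α / max (R ω) 1 ∨ p₂ ω < lam * α / max (R ω) 1}).toReal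
      ≤ (μ S1).toReal + (μ S2).toReal + (μ S3).toReal := by
    have h1 : μ {ω | p₁ ω < lam * α / max (R ω) 1 ∨ p₂ ω < lam * α / max (R ω) 1}
        ≤ μ S1 + μ S2 + μ S3 := by
      calc μ {ω | p₁ ω < lam * α / max (R ω) 1 ∨ p₂ ω < lam * α / max (R ω) 1}
          ≤ μ (S1 ∪ S2 ∪ S3) := measure_mono hcov
        _ ≤ μ (S1 ∪ S2) + μ S3 := measure_union_le _ _
        _ ≤ μ S1 + μ S2 + μ S3 := add_le_add_left (measure_union_le _ _) _
    calc (μ {ω | p₁ ω < lam * α / max (R ω) 1 ∨ p₂ ω < lam * α / max (R ω) 1}).toReal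
        ≤ (μ S1 + μ S2 + μ S3).toReal := by
          apply ENNReal.toReal_mono _ h1
          exact ENNReal.add_ne_top.mpr ⟨ENNReal.add_ne_top.mpr
            ⟨measure_ne_top μ _, measure_ne_top μ _⟩, measure_ne_top μ _⟩
      _ = (μ S1).toReal + (μ S2).toReal + (μ S3).toReal := by
          rw [ENNReal.toReal_add (ENNReal.add_ne_top.mpr
            ⟨measure_ne_top μ _, measure_ne_top μ _⟩) (measure_ne_top μ _),
            ENNReal.toReal_add (measure_ne_top μ _) (measure_ne_top μ _)]
  -- bound P(S1)
  have hT1lb : (1 - c / 2) * (1 - c / 2) ≤ (μ T1).toReal :=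
    hpqd' (c / 2) ⟨le_of_lt ha2, le_of_lt hca⟩ (c / 2) ⟨le_of_lt ha2, le_of_lt hca⟩
  have hbS1 : (μ S1).toReal ≤ 1 - (1 - c / 2) * (1 - c / 2) := by
    have hd : Disjoint S1 T1 := by
      rw [Set.disjoint_left]
      rintro ω (h | h) ⟨h1, h2⟩ <;> linarith
    have := cbp_helper μ mT1 hd (Set.subset_univ _)
    rw [measure_univ] at this
    simp only [ENNReal.toReal_one] at this
    linarith
  -- bound P(S2)
  have hU2 : (μ {ω | lam < p₂ ω}).toReal = 1 - lam := by
    have hcompl : {ω | lam < p₂ ω} = {ω | p₂ ω ≤ lam}ᶜ := by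
      ext ω; simp [not_le]
    rw [hcompl, measure_compl (measurableSet_le hm₂ measurable_const) (measure_ne_top μ _),
      measure_univ, ENNReal.toReal_sub_of_le prob_le_one ENNReal.one_ne_top,
      ENNReal.toReal_one, hunif₂ lam ⟨le_of_lt hl0, le_of_lt hl1⟩]
  have hT2lb : (1 - c) * (1 - lam) ≤ (μ T2).toReal :=
    hpqd' c ⟨le_of_lt hc0, le_of_lt hc1⟩ lam ⟨le_of_lt hl0, le_of_lt hl1⟩
  have hbS2 : (μ S2).toReal ≤ (1 - lam) - (1 - c) * (1 - lam) := by
    have hd : Disjoint S2 T2 := by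
      rw [Set.disjoint_left]
      rintro ω ⟨h1, h2⟩ ⟨h3, h4⟩
      linarith
    have hsub : S2 ∪ T2 ⊆ {ω | lam < p₂ ω} := by
      rintro ω (⟨_, h⟩ | ⟨_, h⟩) <;> exact h
    have := cbp_helper μ mT2 hd hsub
    rw [hU2] at this
    linarith
  -- bound P(S3)
  have hU3 : (μ {ω | lam < p₁ ω}).toReal = 1 - lam := by
    have hcompl : {ω | lam < p₁ ω} = {ω | p₁ ω ≤ lam}ᶜ := by
      ext ω; simp [not_le]
    rw [hcompl, measure_compl (measurableSet_le hm₁ measurable_const) (measure_ne_top μ _),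
      measure_univ, ENNReal.toReal_sub_of_le prob_le_one ENNReal.one_ne_top,
      ENNReal.toReal_one, hunif₁ lam ⟨le_of_lt hl0, le_of_lt hl1⟩]
  have hT3lb : (1 - lam) * (1 - c) ≤ (μ T3).toReal :=
    hpqd' lam ⟨le_of_lt hl0, le_of_lt hl1⟩ c ⟨le_of_lt hc0, le_of_lt hc1⟩
  have hbS3 : (μ S3).toReal ≤ (1 - lam) - (1 - lam) * (1 - c) := by
    have hd : Disjoint S3 T3 := by
      rw [Set.disjoint_left]
      rintro ω ⟨h1, h2⟩ ⟨h3, h4⟩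
      linarith
    have hsub : S3 ∪ T3 ⊆ {ω | lam < p₁ ω} := by
      rintro ω (⟨h, _⟩ | ⟨h, _⟩) <;> exact h
    have := cbp_helper μ mT3 hd hsub
    rw [hU3] at this
    linarith
  -- combine
  have hexp : 1 - (1 - c / 2) * (1 - c / 2) + ((1 - lam) - (1 - c) * (1 - lam))
      + ((1 - lam) - (1 - lam) * (1 - c)) = 1 - (1 - c / 2)^2 + 2 * (1 - lam) * c := by
    ring
  calc (μ {ω | p₁ ω < lam * α / max (R ω) 1 ∨ p₂ ω < lam * α / max (R ω) 1}).toReal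
      ≤ (μ S1).toReal + (μ S2).toReal + (μ S3).toReal := hub
    _ ≤ 1 - (1 - c / 2)^2 + 2 * (1 - lam) * c := by rw [← hexp]; linarith
    _ ≤ α := by rw [hc]; convert hcond using 2 <;> ring
end

section
/- For z_0 = Φ^{-1}(1-λ), z_1 = Φ^{-1}(1-λα), z_2 = Φ^{-1}(1-λα/2) with λ, α ∈ (0,1), define h(ρ) = exp(-(z_2 - ρz_2)^2 + (z_0 - ρz_2)^2) + 2·exp(-(z_1 - ρz_0)^2 + (z_2 - ρz_0)^2). If λ > 1/2 and λα ≤ 2/3, then h is nondecreasing on [0,1) and h(0) ≥ 2; hence h(ρ) ≥ 2 for all ρ ∈ [0,1). -/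
set_option autoImplicit false

open MeasureTheory ProbabilityTheory Set

lemma gauss_strictMono : StrictMono (cdf (gaussianReal 0 1)) := by
  intro x y hxy
  have hne : (gaussianReal 0 1) (Ioc x y) ≠ 0 := by
    intro h0
    have := (gaussianReal_absolutelyContinuous' 0 one_ne_zero) h0
    simp [Real.volume_Ioc, hxy.le] at this
    linarith
  have hsplit : (gaussianReal 0 1) (Iic x) + (gaussianReal 0 1) (Ioc x y)
      = (gaussianReal 0 1) (Iic y) := by
    rw [← measure_union (Iic_disjoint_Ioc le_rfl) measurableSet_Ioc, Iic_union_Ioc_eq_Iic hxy.le]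
  rw [cdf_eq_real, cdf_eq_real, measureReal_def, measureReal_def]
  have h1 : (gaussianReal 0 1) (Iic x) < (gaussianReal 0 1) (Iic y) := by
    rw [← hsplit]
    exact ENNReal.lt_add_right (measure_ne_top _ _) hne
  exact ENNReal.toReal_strict_mono (measure_ne_top _ _) h1

lemma gauss_cdf_neg (x : ℝ) :
    cdf (gaussianReal 0 1) (-x) = 1 - cdf (gaussianReal 0 1) x := by
  set μ := gaussianReal 0 1 with hμ
  have hmap : μ.map (fun y => -1 * y) = μ := by
    rw [hμ, gaussianReal_map_const_mul]
    norm_num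
  have hpre : (fun y => -1 * y) ⁻¹' (Iic (-x)) = Ici x := by
    ext y; simp
  have hIic : μ (Iic (-x)) = μ (Ici x) := by
    conv_lhs => rw [← hmap, Measure.map_apply (by fun_prop) measurableSet_Iic, hpre]
  have hsing : μ {x} = 0 :=
    (gaussianReal_absolutelyContinuous 0 one_ne_zero) (Real.volume_singleton)
  have hIioIic : μ (Iio x) = μ (Iic x) := by
    apply le_antisymm (measure_mono Iio_subset_Iic_self)
    calc μ (Iic x) = μ (Iio x ∪ {x}) := by rw [Iio_union_right]
    _ ≤ μ (Iio x) + μ {x} := measure_union_le _ _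
    _ = μ (Iio x) := by rw [hsing, add_zero]
  have hcompl : μ (Ici x) = 1 - μ (Iic x) := by
    rw [← compl_Iio, measure_compl measurableSet_Iio (measure_ne_top _ _), hIioIic,
      measure_univ]
  rw [cdf_eq_real, cdf_eq_real, measureReal_def, measureReal_def, hIic, hcompl,
    ENNReal.toReal_sub_of_le prob_le_one (by simp), ENNReal.toReal_one]

/-- with `z₀ = Φ⁻¹(1-lam)`, `z₁ = Φ⁻¹(1-lam α)`,
`z₂ = Φ⁻¹(1-lam α/2)` (`Φ` the standard normal CDF), define
`h ρ = exp(-(z₂-ρz₂)² + (z₀-ρz₂)²) + 2 exp(-(z₁-ρz₀)² + (z₂-ρz₀)²)`.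
If `lam > 1/2` and `lam α ≤ 2/3`, then `h` is nondecreasing on `[0,1)`,
`h 0 ≥ 2`, and hence `h ρ ≥ 2` for all `ρ ∈ [0,1)`. -/
theorem h_ge_two_of_lam_alpha
    (lam α : ℝ) (hlam : lam ∈ Set.Ioo (0 : ℝ) 1) (hα : α ∈ Set.Ioo (0 : ℝ) 1)
    (hlam2 : 1/2 < lam) (hla : lam * α ≤ 2/3)
    (z₀ z₁ z₂ : ℝ)
    (hz₀ : cdf (gaussianReal 0 1) z₀ = 1 - lam)
    (hz₁ : cdf (gaussianReal 0 1) z₁ = 1 - lam * α)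
    (hz₂ : cdf (gaussianReal 0 1) z₂ = 1 - lam * α / 2)
    (h : ℝ → ℝ)
    (hh : ∀ ρ : ℝ, h ρ = Real.exp (-(z₂ - ρ * z₂)^2 + (z₀ - ρ * z₂)^2)
        + 2 * Real.exp (-(z₁ - ρ * z₀)^2 + (z₂ - ρ * z₀)^2)) :
    MonotoneOn h (Set.Ico (0 : ℝ) 1) ∧ 2 ≤ h 0 ∧ ∀ ρ ∈ Set.Ico (0 : ℝ) 1, 2 ≤ h ρ := by
  obtain ⟨hl0, hl1⟩ := hlam
  obtain ⟨ha0, ha1⟩ := hα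
  have hla0 : 0 < lam * α := mul_pos hl0 ha0
  -- value of the cdf at 0
  have hΦ0 : cdf (gaussianReal 0 1) 0 = 1/2 := by
    have := gauss_cdf_neg 0
    rw [neg_zero] at this
    linarith
  -- z₀ ≤ 0
  have hz0neg : z₀ ≤ 0 := by
    have : cdf (gaussianReal 0 1) z₀ < cdf (gaussianReal 0 1) 0 := by
      rw [hz₀, hΦ0]; linarith
    exact (gauss_strictMono.lt_iff_lt.mp this).le
  -- 0 ≤ z₂
  have hz2pos : 0 ≤ z₂ := by
    have : cdf (gaussianReal 0 1) 0 < cdf (gaussianReal 0 1) z₂ := by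
      rw [hz₂, hΦ0]; linarith
    exact (gauss_strictMono.lt_iff_lt.mp this).le
  -- z₁ ≤ z₂
  have hz12 : z₁ ≤ z₂ := by
    have : cdf (gaussianReal 0 1) z₁ < cdf (gaussianReal 0 1) z₂ := by
      rw [hz₁, hz₂]; linarith
    exact (gauss_strictMono.lt_iff_lt.mp this).le
  -- -z₁ ≤ z₂
  have hz12' : -z₁ ≤ z₂ := by
    have : cdf (gaussianReal 0 1) (-z₁) ≤ cdf (gaussianReal 0 1) z₂ := by
      rw [gauss_cdf_neg, hz₁, hz₂]; linarith
    exact gauss_strictMono.le_iff_le.mp this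
  have hsq : z₁^2 ≤ z₂^2 := sq_le_sq' (by linarith) hz12
  -- monotonicity
  have hmono : MonotoneOn h (Set.Ico (0 : ℝ) 1) := by
    intro ρ hρ σ hσ hρσ
    rw [hh ρ, hh σ]
    have hE1 : -(z₂ - ρ * z₂)^2 + (z₀ - ρ * z₂)^2 ≤ -(z₂ - σ * z₂)^2 + (z₀ - σ * z₂)^2 := by
      nlinarith [mul_nonneg (mul_nonneg hz2pos (by linarith : (0:ℝ) ≤ z₂ - z₀)) (by linarith : (0:ℝ) ≤ σ - ρ)]
    have hE2 : -(z₁ - ρ * z₀)^2 + (z₂ - ρ * z₀)^2 ≤ -(z₁ - σ * z₀)^2 + (z₂ - σ * z₀)^2 := by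
      nlinarith [mul_nonneg (mul_nonneg (by linarith : (0:ℝ) ≤ -z₀) (by linarith : (0:ℝ) ≤ z₂ - z₁)) (by linarith : (0:ℝ) ≤ σ - ρ)]
    have := Real.exp_le_exp.mpr hE1
    have := Real.exp_le_exp.mpr hE2
    linarith
  refine ⟨hmono, ?_, ?_⟩
  · rw [hh 0]
    have h1 : (0:ℝ) < Real.exp (-(z₂ - 0 * z₂)^2 + (z₀ - 0 * z₂)^2) := Real.exp_pos _
    have h2 : (1:ℝ) ≤ Real.exp (-(z₁ - 0 * z₀)^2 + (z₂ - 0 * z₀)^2) := by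
      rw [← Real.exp_zero]
      apply Real.exp_le_exp.mpr
      nlinarith
    linarith
  · intro ρ hρ
    have h0mem : (0:ℝ) ∈ Set.Ico (0:ℝ) 1 := by constructor <;> norm_num
    have := hmono h0mem hρ hρ.1
    have h2 : (2:ℝ) ≤ h 0 := by
      rw [hh 0]
      have h1 : (0:ℝ) < Real.exp (-(z₂ - 0 * z₂)^2 + (z₀ - 0 * z₂)^2) := Real.exp_pos _
      have h2' : (1:ℝ) ≤ Real.exp (-(z₁ - 0 * z₀)^2 + (z₂ - 0 * z₀)^2) := by
        rw [← Real.exp_zero]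
        apply Real.exp_le_exp.mpr
        nlinarith
      linarith
    linarith
end

section
/- Let p_1, ..., p_m be independent [0,1]-valued random variables, each supra-uniform, and let λ ∈ (0,1]. For each subset K of {1,...,m}, condition on the event G_K = {p_i ≤ λ for i ∈ K, p_j > λ for j ∉ K} (assumed to have positive probability). Then conditionally on G_K, the rescaled values (p_i/λ)_{i ∈ K} are independent and each stochastically dominates Uniform[0,1]. -/
set_option autoImplicit false

open MeasureTheory ProbabilityTheory

/-- let `p₁,…,p_m` be independent supra-uniform `[0,1]`-valued
random variables and `lam ∈ (0,1]`. For a subset `K` of `{1,…,m}`, condition on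
the event `G_K = {p_i ≤ lam for i ∈ K, p_j > lam for j ∉ K}` (of positive
probability). Then, under `μ[|G_K]`, the rescaled values `(p_i/lam)_{i ∈ K}`
are independent and each stochastically dominates `Uniform[0,1]`:
`P(p_i/lam < t | G_K) ≤ t` for all `t ∈ [0,1]`. -/
theorem conditional_orthant_independent_dominating
    {Ω : Type*} [MeasurableSpace Ω] (μ : Measure Ω) [IsProbabilityMeasure μ]
    (m : ℕ) (p : Fin m → Ω → ℝ) (hmeas : ∀ i, Measurable (p i))
    (hrange : ∀ i ω, p i ω ∈ Set.Icc (0 : ℝ) 1)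
    (hindep : iIndepFun p μ)
    (hsu : ∀ i, SupraUniform μ (p i))
    (lam : ℝ) (hlam : lam ∈ Set.Ioc (0 : ℝ) 1)
    (K : Finset (Fin m))
    (G : Set Ω)
    (hG : G = {ω | (∀ i ∈ K, p i ω ≤ lam) ∧ (∀ j ∉ K, lam < p j ω)})
    (hGpos : 0 < μ G) :
    iIndepFun
        (fun (i : {i : Fin m // i ∈ K}) (ω : Ω) => p i ω / lam) (μ[|G])
      ∧ ∀ i ∈ K, ∀ t ∈ Set.Icc (0 : ℝ) 1,
        ((μ[|G]) {ω | p i ω / lam < t}).toReal ≤ t := by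
  classical
  have hlam0 : (0:ℝ) < lam := hlam.1
  have hlam1 : lam ≤ 1 := hlam.2
  -- base sets
  set b : Fin m → Set ℝ := fun i => if i ∈ K then Set.Iic lam else Set.Ioi lam with hb
  have hbm : ∀ i, MeasurableSet (b i) := by
    intro i
    by_cases h : i ∈ K <;> simp [hb, h]
  have hGeq : G = ⋂ i, p i ⁻¹' b i := by
    ext ω
    simp only [hG, Set.mem_setOf_eq, Set.mem_iInter, Set.mem_preimage, hb]
    constructor
    · rintro ⟨h1, h2⟩ i
      by_cases h : i ∈ K
      · simpa [h] using h1 i h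
      · simpa [h] using h2 i h
    · intro h
      refine ⟨fun i hi => ?_, fun j hj => ?_⟩
      · have := h i; simpa [hi] using this
      · have := h j; simpa [hj] using this
  have hGm : MeasurableSet G := by
    rw [hGeq]; exact MeasurableSet.iInter fun i => (hmeas i) (hbm i)
  have hμGne : μ G ≠ 0 := ne_of_gt hGpos
  -- key product formula
  have hprod : ∀ g : Fin m → Set ℝ, (∀ i, MeasurableSet (g i)) →
      μ (⋂ i, p i ⁻¹' g i) = ∏ i, μ (p i ⁻¹' g i) := by
    intro g hg
    have := hindep.measure_inter_preimage_eq_mul Finset.univ (sets := g) (fun i _ => hg i)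
    simpa using this
  have hμG : μ G = ∏ i, μ (p i ⁻¹' b i) := by rw [hGeq]; exact hprod b hbm
  have hbne : ∀ i, μ (p i ⁻¹' b i) ≠ 0 := by
    have h := hμGne
    rw [hμG, Finset.prod_ne_zero_iff] at h
    exact fun i => h i (Finset.mem_univ i)
  have hβpos : ∀ i, 0 < (μ (p i ⁻¹' b i)).toReal :=
    fun i => ENNReal.toReal_pos (hbne i) (measure_ne_top μ _)
  have hcond := cond_isProbabilityMeasure (μ := μ) (s := G) hμGne
  constructor
  · -- independence part
    rw [iIndepFun_iff_measure_inter_preimage_eq_mul]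
    intro S sets hsets
    set Q : {i : Fin m // i ∈ K} → Set ℝ := fun j => (· / lam) ⁻¹' sets j with hQ
    have hQm : ∀ j ∈ S, MeasurableSet (Q j) :=
      fun j hj => (hsets j hj).preimage (measurable_id.div_const lam)
    -- key computation for any T ⊆ S
    have key : ∀ T : Finset {i : Fin m // i ∈ K}, T ⊆ S →
        ((μ[|G]) (⋂ j ∈ T, (fun ω => p j.1 ω / lam) ⁻¹' sets j)).toReal
          = (∏ j ∈ T, (μ (p j.1 ⁻¹' (b j.1 ∩ Q j))).toReal)
            / ∏ j ∈ T, (μ (p j.1 ⁻¹' b j.1)).toReal := by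
      intro T hTS
      set g : Fin m → Set ℝ :=
        fun i => b i ∩ ⋂ j ∈ T.filter (fun j : {i : Fin m // i ∈ K} => j.1 = i), Q j with hg
      have hgm : ∀ i, MeasurableSet (g i) := by
        intro i
        refine (hbm i).inter ?_
        exact MeasurableSet.iInter fun j => MeasurableSet.iInter fun hj =>
          hQm j (hTS (Finset.mem_of_mem_filter j hj))
      have hsetEq : G ∩ ⋂ j ∈ T, (fun ω => p j.1 ω / lam) ⁻¹' sets j
          = ⋂ i, p i ⁻¹' g i := by
        rw [hGeq]
        ext ω
        simp only [hg, hQ, Set.mem_inter_iff, Set.mem_iInter, Set.mem_preimage,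
          Finset.mem_filter]
        constructor
        · rintro ⟨h1, h2⟩ i
          refine ⟨h1 i, fun j hj => ?_⟩
          rcases hj with ⟨hjT, rfl⟩
          exact h2 j hjT
        · intro h
          refine ⟨fun i => (h i).1, fun j hj => ?_⟩
          exact (h j.1).2 j ⟨hj, rfl⟩
      have hg_not : ∀ i : Fin m, (∀ j ∈ T, j.1 ≠ i) → g i = b i := by
        intro i h
        have hf : T.filter (fun j : {i : Fin m // i ∈ K} => j.1 = i) = ∅ :=
          Finset.filter_false_of_mem (fun j hj => h j hj)
        simp only [hg, hf]
        simp
      have hg_mem : ∀ j ∈ T, g j.1 = b j.1 ∩ Q j := by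
        intro j hj
        have hf : T.filter (fun j' : {i : Fin m // i ∈ K} => j'.1 = j.1) = {j} := by
          ext j'
          simp only [Finset.mem_filter, Finset.mem_singleton]
          constructor
          · rintro ⟨_, h⟩; exact Subtype.ext h
          · rintro rfl; exact ⟨hj, rfl⟩
        simp only [hg, hf, Finset.set_biInter_singleton]
      -- embedding and product splitting
      set e : {i : Fin m // i ∈ K} ↪ Fin m := ⟨Subtype.val, Subtype.val_injective⟩ with he
      set S' : Finset (Fin m) := T.map e with hS'
      have hsplit : ∀ f : Fin m → ENNReal,
          ∏ i, f i = (∏ i ∈ Finset.univ \ S', f i) * ∏ j ∈ T, f j.1 := by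
        intro f
        rw [← Finset.prod_sdiff (Finset.subset_univ S')]
        congr 1
        rw [hS', Finset.prod_map]
        rfl
      have hnotmem : ∀ i ∈ Finset.univ \ S', g i = b i := by
        intro i hi
        rw [Finset.mem_sdiff] at hi
        refine hg_not i fun j hj hji => hi.2 ?_
        rw [hS', Finset.mem_map]
        exact ⟨j, hj, hji⟩
      have hnum : μ (G ∩ ⋂ j ∈ T, (fun ω => p j.1 ω / lam) ⁻¹' sets j)
          = (∏ i ∈ Finset.univ \ S', μ (p i ⁻¹' b i))
            * ∏ j ∈ T, μ (p j.1 ⁻¹' (b j.1 ∩ Q j)) := by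
        rw [hsetEq, hprod g hgm, hsplit (fun i => μ (p i ⁻¹' g i))]
        congr 1
        · exact Finset.prod_congr rfl fun i hi => by rw [hnotmem i hi]
        · exact Finset.prod_congr rfl fun j hj => by rw [hg_mem j hj]
      have hden : μ G = (∏ i ∈ Finset.univ \ S', μ (p i ⁻¹' b i))
          * ∏ j ∈ T, μ (p j.1 ⁻¹' b j.1) := by
        rw [hμG, hsplit (fun i => μ (p i ⁻¹' b i))]
      have hC : (0:ℝ) < (∏ i ∈ Finset.univ \ S', μ (p i ⁻¹' b i)).toReal := by
        rw [ENNReal.toReal_prod]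
        exact Finset.prod_pos fun i _ => hβpos i
      have hB : (0:ℝ) < (∏ j ∈ T, μ (p j.1 ⁻¹' b j.1)).toReal := by
        rw [ENNReal.toReal_prod]
        exact Finset.prod_pos fun j _ => hβpos j.1
      rw [cond_apply hGm, ENNReal.toReal_mul, ENNReal.toReal_inv, hnum, hden,
        ENNReal.toReal_mul, ENNReal.toReal_mul, ENNReal.toReal_prod,
        ENNReal.toReal_prod, ENNReal.toReal_prod]
      rw [ENNReal.toReal_prod] at hC hB
      field_simp
    -- both sides are finite, compare toReal
    have hfin1 : (μ[|G]) (⋂ j ∈ S, (fun ω => p j.1 ω / lam) ⁻¹' sets j) ≠ ⊤ :=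
      measure_ne_top _ _
    have hfin2 : (∏ j ∈ S, (μ[|G]) ((fun ω => p j.1 ω / lam) ⁻¹' sets j)) ≠ ⊤ :=
      ENNReal.prod_ne_top fun j _ => measure_ne_top _ _
    rw [← ENNReal.toReal_eq_toReal_iff' hfin1 hfin2, key S (le_refl S), ENNReal.toReal_prod]
    rw [eq_comm, ← Finset.prod_div_distrib]
    refine Finset.prod_congr rfl fun j hj => ?_
    have hsingle := key {j} (by simpa using hj)
    simpa using hsingle
  · -- domination part
    intro i hi t ht
    have hEset : {ω | p i ω / lam < t} = p i ⁻¹' Set.Iio (t * lam) := by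
      ext ω
      simp only [Set.mem_setOf_eq, Set.mem_preimage, Set.mem_Iio]
      exact div_lt_iff₀ hlam0
    set A : Set ℝ := Set.Iio (t * lam) ∩ Set.Iic lam with hA
    set g : Fin m → Set ℝ := fun j => if j = i then A else b j with hg
    have hgm : ∀ j, MeasurableSet (g j) := by
      intro j
      by_cases h : j = i
      · simp [hg, h, hA, (measurableSet_Iio).inter measurableSet_Iic]
      · simp [hg, h, hbm j]
    have hbi : b i = Set.Iic lam := by simp [hb, hi]
    have hsetEq : G ∩ {ω | p i ω / lam < t} = ⋂ j, p j ⁻¹' g j := by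
      rw [hGeq, hEset]
      ext ω
      simp only [Set.mem_inter_iff, Set.mem_iInter, Set.mem_preimage, hg, hA]
      constructor
      · rintro ⟨h1, h2⟩ j
        by_cases h : j = i
        · subst h
          rw [if_pos rfl]
          have := h1 j
          rw [hbi] at this
          exact ⟨h2, this⟩
        · simpa [h] using h1 j
      · intro h
        refine ⟨fun j => ?_, ?_⟩
        · by_cases hji : j = i
          · subst hji
            have := h j
            rw [if_pos rfl] at this
            rw [hbi]
            exact this.2
          · have := h j
            rwa [if_neg hji] at this
        · have := h i
          rw [if_pos rfl] at this
          exact this.1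
    have hnum : μ (G ∩ {ω | p i ω / lam < t})
        = μ (p i ⁻¹' A) * ∏ j ∈ Finset.univ.erase i, μ (p j ⁻¹' b j) := by
      rw [hsetEq, hprod g hgm,
        ← Finset.mul_prod_erase _ (fun j => μ (p j ⁻¹' g j)) (Finset.mem_univ i)]
      congr 1
      · simp [hg]
      · exact Finset.prod_congr rfl fun j hj => by
          simp [hg, Finset.ne_of_mem_erase hj]
    have hden : μ G = μ (p i ⁻¹' Set.Iic lam) * ∏ j ∈ Finset.univ.erase i, μ (p j ⁻¹' b j) := by
      rw [hμG, ← Finset.mul_prod_erase _ (fun j => μ (p j ⁻¹' b j)) (Finset.mem_univ i), hbi]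
    have hc : (0:ℝ) < (∏ j ∈ Finset.univ.erase i, μ (p j ⁻¹' b j)).toReal := by
      rw [ENNReal.toReal_prod]
      exact Finset.prod_pos fun j _ => hβpos j
    have hd : (0:ℝ) < (μ (p i ⁻¹' Set.Iic lam)).toReal := by
      have := hβpos i
      rwa [hbi] at this
    have hIic : p i ⁻¹' Set.Iic lam = {ω | p i ω ≤ lam} := rfl
    have hAeq : p i ⁻¹' A = {ω | p i ω < t * lam} ∩ {ω | p i ω ≤ lam} := rfl
    have hsu' := hsu i (t * lam) lam (mul_nonneg ht.1 hlam0.le)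
      (by nlinarith [ht.2]) hlam1 (by rwa [hIic] at hd)
    have hfrac : (μ (p i ⁻¹' A)).toReal / (μ (p i ⁻¹' Set.Iic lam)).toReal ≤ t := by
      rw [hAeq, hIic]
      calc (μ ({ω | p i ω < t * lam} ∩ {ω | p i ω ≤ lam})).toReal
            / (μ {ω | p i ω ≤ lam}).toReal ≤ (t * lam) / lam := hsu'
        _ = t := mul_div_cancel_right₀ t (ne_of_gt hlam0)
    rw [cond_apply hGm, ENNReal.toReal_mul, ENNReal.toReal_inv, hnum, hden,
      ENNReal.toReal_mul, ENNReal.toReal_mul]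
    rw [inv_mul_eq_div] at *
    calc (μ (p i ⁻¹' A)).toReal * (∏ j ∈ Finset.univ.erase i, μ (p j ⁻¹' b j)).toReal
          / ((μ (p i ⁻¹' Set.Iic lam)).toReal
            * (∏ j ∈ Finset.univ.erase i, μ (p j ⁻¹' b j)).toReal)
        = (μ (p i ⁻¹' A)).toReal / (μ (p i ⁻¹' Set.Iic lam)).toReal := by
          rw [mul_div_mul_right _ _ (ne_of_gt hc)]
      _ ≤ t := hfrac
end

section
/- Let U be a standard normal random variable and let μ ∈ ℝ, ρ ∈ [0,1), λ ∈ (0,1]. If E[1/Φ(μ - √ρ·U)] ≤ 1/λ, and if R | U is distributed as 1 + Binomial(m-1, Φ(μ - √ρ·U)), then E[1/R] ≤ 1/(mλ). -/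
set_option autoImplicit false

open MeasureTheory ProbabilityTheory

section AuxInvR

open Real Set


lemma aux_cdf_pos (x : ℝ) : 0 < cdf (gaussianReal 0 1) x := by
  rw [cdf_eq_real, Measure.real]
  refine ENNReal.toReal_pos (fun h => ?_) (measure_ne_top _ _)
  have h2 := gaussianReal_absolutelyContinuous' 0 (one_ne_zero) h
  rw [Real.volume_Iic] at h2
  simp at h2

lemma aux_cdf_lower (x : ℝ) :
    (Real.sqrt (2 * π))⁻¹ * Real.exp (-(|x| + 1) ^ 2 / 2) ≤ cdf (gaussianReal 0 1) x := by
  have h1 : cdf (gaussianReal 0 1) x = ((gaussianReal 0 1) (Iic x)).toReal := by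
    rw [cdf_eq_real, Measure.real]
  have hmono : ((gaussianReal 0 1) (Ioc (x - 1) x)).toReal
      ≤ ((gaussianReal 0 1) (Iic x)).toReal :=
    ENNReal.toReal_mono (measure_ne_top _ _) (measure_mono Ioc_subset_Iic_self)
  have h2 : ((gaussianReal 0 1) (Ioc (x - 1) x)).toReal
      = ∫ t in Ioc (x - 1) x, gaussianPDFReal 0 1 t := by
    rw [gaussianReal_apply_eq_integral 0 one_ne_zero, ENNReal.toReal_ofReal]
    exact setIntegral_nonneg measurableSet_Ioc fun t _ => gaussianPDFReal_nonneg 0 1 t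
  have key : (Real.sqrt (2 * π))⁻¹ * Real.exp (-(|x| + 1) ^ 2 / 2)
      ≤ ∫ t in Ioc (x - 1) x, gaussianPDFReal 0 1 t := by
    have hconst : ∫ _t in Ioc (x - 1) x, ((Real.sqrt (2 * π))⁻¹ * Real.exp (-(|x| + 1) ^ 2 / 2))
        = (Real.sqrt (2 * π))⁻¹ * Real.exp (-(|x| + 1) ^ 2 / 2) := by
      rw [setIntegral_const, Real.volume_real_Ioc]
      norm_num
    rw [← hconst]
    refine setIntegral_mono_on (integrableOn_const ?_)
      (integrable_gaussianPDFReal 0 1).integrableOn measurableSet_Ioc (fun t ht => ?_)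
    · rw [Real.volume_Ioc]; exact ENNReal.ofReal_ne_top
    · have h3 : t ^ 2 ≤ (|x| + 1) ^ 2 := by
        have := le_abs_self x
        have := neg_abs_le x
        obtain ⟨ht1, ht2⟩ := ht
        nlinarith
      rw [gaussianPDFReal]
      simp only [NNReal.coe_one, mul_one, sub_zero]
      have h4 : -(|x| + 1) ^ 2 / 2 ≤ -t ^ 2 / 2 := by linarith
      exact mul_le_mul_of_nonneg_left (Real.exp_le_exp.2 h4) (by positivity)
  linarith

lemma aux_integrable_exp {β : ℝ} (c : ℝ) (hβ : 0 < β) :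
    Integrable (fun u : ℝ => Real.exp (c * u - β * u ^ 2)) := by
  have h : (fun u : ℝ => Real.exp (c * u - β * u ^ 2))
      = fun u => Real.exp (c ^ 2 / (4 * β)) * Real.exp (-β * (u - c / (2 * β)) ^ 2) := by
    funext u
    rw [← Real.exp_add]
    congr 1
    field_simp
    ring
  rw [h]
  exact ((integrable_exp_neg_mul_sq hβ).comp_sub_right (c / (2 * β))).const_mul _

lemma aux_integrable_inv_q (μ₀ ρ : ℝ) (hρ0 : 0 ≤ ρ) (hρ1 : ρ < 1) :
    Integrable (fun u => (cdf (gaussianReal 0 1) (μ₀ - Real.sqrt ρ * u))⁻¹)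
      (gaussianReal 0 1) := by
  set b := Real.sqrt ρ with hb
  have hb0 : 0 ≤ b := Real.sqrt_nonneg ρ
  have hb2 : b ^ 2 = ρ := Real.sq_sqrt hρ0
  clear_value b
  set a := |μ₀| + 1 with ha
  have ha0 : 0 < a := by positivity
  set β := (1 - ρ) / 2 with hβdef
  have hβ : 0 < β := by simp only [hβdef]; linarith
  clear_value a β
  -- pointwise bound
  have hbound : ∀ u : ℝ, (cdf (gaussianReal 0 1) (μ₀ - b * u))⁻¹
      ≤ Real.sqrt (2 * π) * Real.exp ((|μ₀ - b * u| + 1) ^ 2 / 2) := by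
    intro u
    set x := μ₀ - b * u
    have h1 := aux_cdf_lower x
    have h2 : (0:ℝ) < (Real.sqrt (2 * π))⁻¹ * Real.exp (-(|x| + 1) ^ 2 / 2) := by
      have : (0:ℝ) < Real.sqrt (2 * π) := Real.sqrt_pos.2 (by positivity)
      positivity
    calc (cdf (gaussianReal 0 1) x)⁻¹
        ≤ ((Real.sqrt (2 * π))⁻¹ * Real.exp (-(|x| + 1) ^ 2 / 2))⁻¹ :=
          (inv_anti₀ h2 h1)
      _ = Real.sqrt (2 * π) * Real.exp ((|x| + 1) ^ 2 / 2) := by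
          rw [mul_inv, inv_inv, ← Real.exp_neg]
          ring_nf
  -- integrability of the bound
  have hgmeas : Measurable fun u : ℝ => Real.sqrt (2 * π) * Real.exp ((|μ₀ - b * u| + 1) ^ 2 / 2) := by
    fun_prop
  have hgint : Integrable (fun u : ℝ => Real.sqrt (2 * π) * Real.exp ((|μ₀ - b * u| + 1) ^ 2 / 2))
      (gaussianReal 0 1) := by
    rw [gaussianReal_of_var_ne_zero 0 one_ne_zero,
      integrable_withDensity_iff (measurable_gaussianPDF 0 1)
        (ae_of_all _ fun x => ENNReal.ofReal_lt_top)]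
    have hpdf : ∀ u : ℝ, (gaussianPDF 0 1 u).toReal = gaussianPDFReal 0 1 u := fun u =>
      ENNReal.toReal_ofReal (gaussianPDFReal_nonneg 0 1 u)
    have hK : Integrable (fun u : ℝ => Real.exp (a ^ 2 / 2) *
        (Real.exp (a * b * u - β * u ^ 2) + Real.exp (-(a * b) * u - β * u ^ 2))) := by
      exact ((aux_integrable_exp (a * b) hβ).add (aux_integrable_exp (-(a * b)) hβ)).const_mul _
    refine hK.mono' ?_ (ae_of_all _ fun u => ?_)
    · exact (hgmeas.mul ((measurable_gaussianPDF 0 1).ennreal_toReal)).aestronglyMeasurable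
    · have hpdfv : gaussianPDFReal 0 1 u = (Real.sqrt (2 * π))⁻¹ * Real.exp (-u ^ 2 / 2) := by
        rw [gaussianPDFReal]
        norm_num
      have hsq : (0:ℝ) < Real.sqrt (2 * π) := Real.sqrt_pos.2 (by positivity)
      rw [Real.norm_eq_abs, abs_of_nonneg (by positivity), hpdf, hpdfv]
      have hx : |μ₀ - b * u| + 1 ≤ a + b * |u| := by
        have h5 : |μ₀ - b * u| ≤ |μ₀| + b * |u| := by
          calc |μ₀ - b * u| ≤ |μ₀| + |b * u| := abs_sub _ _
            _ = |μ₀| + b * |u| := by rw [abs_mul, abs_of_nonneg hb0]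
        simp only [ha]; linarith
      have hx2 : (|μ₀ - b * u| + 1) ^ 2 / 2 - u ^ 2 / 2 ≤ a ^ 2 / 2 + a * b * |u| - β * u ^ 2 := by
        have h6 : (|μ₀ - b * u| + 1) ^ 2 ≤ (a + b * |u|) ^ 2 := by
          have := abs_nonneg (μ₀ - b * u)
          nlinarith
        have h7 : (a + b * |u|) ^ 2 = a ^ 2 + 2 * (a * b) * |u| + ρ * u ^ 2 := by
          rw [← hb2, ← sq_abs u]; ring
        have hβ' : β * u ^ 2 = u ^ 2 / 2 - ρ * u ^ 2 / 2 := by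
          simp only [hβdef]; ring
        nlinarith
      have hcancel : Real.sqrt (2 * π) * (Real.sqrt (2 * π))⁻¹ = 1 :=
        mul_inv_cancel₀ (ne_of_gt hsq)
      calc Real.sqrt (2 * π) * Real.exp ((|μ₀ - b * u| + 1) ^ 2 / 2)
            * ((Real.sqrt (2 * π))⁻¹ * Real.exp (-u ^ 2 / 2))
          = (Real.sqrt (2 * π) * (Real.sqrt (2 * π))⁻¹)
            * (Real.exp ((|μ₀ - b * u| + 1) ^ 2 / 2) * Real.exp (-u ^ 2 / 2)) := by ring
        _ = Real.exp ((|μ₀ - b * u| + 1) ^ 2 / 2 + -u ^ 2 / 2) := by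
            rw [hcancel, one_mul, ← Real.exp_add]
        _ ≤ Real.exp (a ^ 2 / 2 + (a * b * |u| - β * u ^ 2)) := by
            apply Real.exp_le_exp.2; linarith
        _ = Real.exp (a ^ 2 / 2) * Real.exp (a * b * |u| - β * u ^ 2) := Real.exp_add _ _
        _ ≤ Real.exp (a ^ 2 / 2) *
            (Real.exp (a * b * u - β * u ^ 2) + Real.exp (-(a * b) * u - β * u ^ 2)) := by
            apply mul_le_mul_of_nonneg_left _ (Real.exp_nonneg _)
            rcases abs_cases u with ⟨h, _⟩ | ⟨h, _⟩
            · rw [h]; nlinarith [Real.exp_pos (-(a * b) * u - β * u ^ 2)]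
            · rw [h]
              have : -(a * b) * u - β * u ^ 2 = a * b * -u - β * u ^ 2 := by ring
              rw [this]; nlinarith [Real.exp_pos (a * b * u - β * u ^ 2)]
  refine hgint.mono' ?_ (ae_of_all _ fun u => ?_)
  · refine (Measurable.aestronglyMeasurable ?_)
    have : Measurable fun u : ℝ => cdf (gaussianReal 0 1) (μ₀ - b * u) :=
      ((cdf _).mono.measurable).comp (measurable_const.sub (measurable_const.mul measurable_id))
    exact this.inv
  · rw [Real.norm_eq_abs, abs_of_nonneg (le_of_lt (inv_pos.2 (aux_cdf_pos _)))]
    exact hbound u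


lemma aux_binom_sum (m : ℕ) (hm : 1 ≤ m) (p : ℝ) (hp : 0 < p) (hp1 : p ≤ 1) :
    ∑ k ∈ Finset.range m,
      ((k : ℝ) + 1)⁻¹ * (((m - 1).choose k : ℝ) * p ^ k * (1 - p) ^ (m - 1 - k))
      ≤ ((m : ℝ) * p)⁻¹ := by
  have hm0 : (0:ℝ) < m := by exact_mod_cast hm
  have hmp : (0:ℝ) < (m : ℝ) * p := by positivity
  rw [← one_div, le_div_iff₀ hmp]
  have key : (∑ k ∈ Finset.range m,
      ((k : ℝ) + 1)⁻¹ * (((m - 1).choose k : ℝ) * p ^ k * (1 - p) ^ (m - 1 - k))) * ((m:ℝ) * p)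
      = ∑ k ∈ Finset.range m, ((m.choose (k + 1) : ℝ) * p ^ (k + 1) * (1 - p) ^ (m - (k + 1))) := by
    rw [Finset.sum_mul]
    refine Finset.sum_congr rfl fun k hk => ?_
    have hk' : k < m := Finset.mem_range.1 hk
    have hnat : m * (m - 1).choose k = m.choose (k + 1) * (k + 1) := by
      have h := Nat.add_one_mul_choose_eq (m - 1) k
      have h2 : m - 1 + 1 = m := by omega
      rwa [h2] at h
    have hcast : (m : ℝ) * ((m - 1).choose k : ℝ) = (m.choose (k + 1) : ℝ) * ((k : ℝ) + 1) := by
      exact_mod_cast congrArg (Nat.cast (R := ℝ)) hnat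
    have hmk : m - 1 - k = m - (k + 1) := by omega
    have hk0 : ((k : ℝ) + 1) ≠ 0 := by positivity
    have h9 : ((k : ℝ) + 1)⁻¹ * ((k : ℝ) + 1) = 1 := inv_mul_cancel₀ hk0
    rw [hmk, pow_succ]
    linear_combination (((k:ℝ)+1)⁻¹ * p ^ k * p * (1-p) ^ (m-(k+1))) * hcast
      + ((m.choose (k+1) : ℝ) * p ^ k * p * (1-p) ^ (m-(k+1))) * h9
  rw [key]
  have hbinom : ∑ j ∈ Finset.range (m + 1), ((m.choose j : ℝ) * p ^ j * (1 - p) ^ (m - j))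
      = 1 := by
    have h := add_pow p (1 - p) m
    simp only [add_sub_cancel, one_pow] at h
    calc ∑ j ∈ Finset.range (m + 1), ((m.choose j : ℝ) * p ^ j * (1 - p) ^ (m - j))
        = ∑ j ∈ Finset.range (m + 1), p ^ j * (1 - p) ^ (m - j) * (m.choose j : ℝ) :=
          Finset.sum_congr rfl fun j _ => by ring
      _ = 1 := h.symm
  rw [Finset.sum_range_succ'] at hbinom
  have hp0 : (0:ℝ) ≤ 1 - p := by linarith
  have h0 : (0:ℝ) ≤ (m.choose 0 : ℝ) * p ^ 0 * (1 - p) ^ (m - 0) := by positivity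
  linarith

end AuxInvR

section

open Real Set

/-- let `U` be standard normal and suppose, given `U`, that `R` is
distributed as `1 + Binomial(m-1, q(U))` with `q(u) = Φ(μ₀ - √ρ·u)` (`Φ` the
standard normal CDF). If `E[1/Φ(μ₀ - √ρ·U)] ≤ 1/lam`, then `E[1/R] ≤ 1/(m·lam)`. -/
theorem inv_R_expectation_bound
    {Ω : Type*} [MeasurableSpace Ω] (P : Measure Ω) [IsProbabilityMeasure P]
    (m : ℕ) (hm : 1 ≤ m)
    (μ₀ ρ lam : ℝ) (hρ : ρ ∈ Set.Ico (0 : ℝ) 1) (hlam : lam ∈ Set.Ioc (0 : ℝ) 1)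
    (U : Ω → ℝ) (hU : Measurable U) (hUlaw : P.map U = gaussianReal 0 1)
    (R : Ω → ℕ) (hR : Measurable R)
    (q : ℝ → ℝ) (hq : ∀ u, q u = cdf (gaussianReal 0 1) (μ₀ - Real.sqrt ρ * u))
    -- conditionally on `U`, `R - 1` is binomial with parameters `m-1` and `q(U)`
    (hbin : ∀ (B : Set ℝ), MeasurableSet B → ∀ k : ℕ, k ≤ m - 1 →
      P ({ω | R ω = k + 1} ∩ U ⁻¹' B)
        = ∫⁻ u in B, ENNReal.ofReal
            (((m - 1).choose k : ℝ) * q u ^ k * (1 - q u) ^ (m - 1 - k))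
            ∂(gaussianReal 0 1))
    (hR_range : ∀ ω, 1 ≤ R ω ∧ R ω ≤ m)
    (hint : ∫ u, (q u)⁻¹ ∂(gaussianReal 0 1) ≤ lam⁻¹) :
    ∫ ω, ((R ω : ℝ))⁻¹ ∂P ≤ 1 / (m * lam) := by
  have hqfun : q = fun u => cdf (gaussianReal 0 1) (μ₀ - Real.sqrt ρ * u) := funext hq
  have hq0 : ∀ u, 0 < q u := fun u => by rw [hq]; exact aux_cdf_pos _
  have hq1 : ∀ u, q u ≤ 1 := fun u => by rw [hq]; exact cdf_le_one _ _
  have hqmeas : Measurable q := by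
    rw [hqfun]
    exact ((cdf _).mono.measurable).comp
      (measurable_const.sub (measurable_const.mul measurable_id))
  -- the conditional pmf of R - 1
  set γ := gaussianReal 0 1 with hγ
  set pmf : ℕ → ℝ → ℝ :=
    fun k u => ((m - 1).choose k : ℝ) * q u ^ k * (1 - q u) ^ (m - 1 - k) with hpmf
  have hpmf_nonneg : ∀ k u, 0 ≤ pmf k u := fun k u => by
    have h1 := (hq0 u).le
    have h2 : (0:ℝ) ≤ 1 - q u := by linarith [hq1 u]
    positivity
  have hpmf_meas : ∀ k, Measurable (pmf k) := fun k => by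
    apply Measurable.mul
    · exact (measurable_const.mul (hqmeas.pow_const _))
    · exact ((measurable_const.sub hqmeas).pow_const _)
  have hpmf_int : ∀ k, Integrable (pmf k) γ := by
    intro k
    refine Integrable.mono' (integrable_const (((m - 1).choose k : ℝ))) 
      (hpmf_meas k).aestronglyMeasurable (ae_of_all _ fun u => ?_)
    rw [Real.norm_eq_abs, abs_of_nonneg (hpmf_nonneg k u)]
    have h1 := (hq0 u).le
    have h2 : (0:ℝ) ≤ 1 - q u := by linarith [hq1 u]
    have h3 : q u ^ k ≤ 1 := pow_le_one₀ h1 (hq1 u)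
    have h4 : (1 - q u) ^ (m - 1 - k) ≤ 1 := pow_le_one₀ h2 (by linarith [hq0 u])
    calc ((m - 1).choose k : ℝ) * q u ^ k * (1 - q u) ^ (m - 1 - k)
        ≤ ((m - 1).choose k : ℝ) * 1 * 1 := by
          apply mul_le_mul _ h4 (by positivity) (by positivity)
          exact mul_le_mul le_rfl h3 (by positivity) (by positivity)
      _ = ((m - 1).choose k : ℝ) := by ring
  -- measurability of the level sets of R
  have hsets : ∀ k : ℕ, MeasurableSet {ω | R ω = k + 1} := fun k =>
    hR (measurableSet_singleton (k + 1))
  -- value of P on level sets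
  have hPk : ∀ k ∈ Finset.range m, (P {ω | R ω = k + 1}).toReal = ∫ u, pmf k u ∂γ := by
    intro k hk
    have hk' : k ≤ m - 1 := by have := Finset.mem_range.1 hk; omega
    have h := hbin Set.univ MeasurableSet.univ k hk'
    rw [Set.preimage_univ, Set.inter_univ, Measure.restrict_univ] at h
    rw [h, ← ofReal_integral_eq_lintegral_ofReal (hpmf_int k)
      (ae_of_all _ (hpmf_nonneg k))]
    exact ENNReal.toReal_ofReal (integral_nonneg (hpmf_nonneg k))
  -- decompose 1/R
  have hdecomp : ∀ ω, ((R ω : ℝ))⁻¹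
      = ∑ k ∈ Finset.range m,
          Set.indicator {ω' | R ω' = k + 1} (fun _ => ((k : ℝ) + 1)⁻¹) ω := by
    intro ω
    obtain ⟨h1, h2⟩ := hR_range ω
    rw [Finset.sum_eq_single (R ω - 1)]
    · have h3 : R ω - 1 + 1 = R ω := by omega
      rw [Set.indicator_of_mem (by simp only [Set.mem_setOf_eq]; omega)]
      congr 1
      have : ((R ω - 1 : ℕ) : ℝ) = (R ω : ℝ) - 1 := by
        push_cast [h1]
        ring
      rw [this]; ring
    · intro k hk hne
      rw [Set.indicator_of_notMem]
      simp only [Set.mem_setOf_eq]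
      omega
    · intro h
      exact absurd (Finset.mem_range.2 (by omega)) h
  -- compute the integral
  have hInt : ∫ ω, ((R ω : ℝ))⁻¹ ∂P
      = ∑ k ∈ Finset.range m, ((k : ℝ) + 1)⁻¹ * (P {ω | R ω = k + 1}).toReal := by
    calc ∫ ω, ((R ω : ℝ))⁻¹ ∂P
        = ∫ ω, ∑ k ∈ Finset.range m,
            Set.indicator {ω' | R ω' = k + 1} (fun _ => ((k : ℝ) + 1)⁻¹) ω ∂P := by
          exact integral_congr_ae (ae_of_all _ hdecomp)
      _ = ∑ k ∈ Finset.range m, ∫ ω,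
            Set.indicator {ω' | R ω' = k + 1} (fun _ => ((k : ℝ) + 1)⁻¹) ω ∂P :=
          integral_finset_sum _ (fun k _ => (integrable_const _).indicator (hsets k))
      _ = ∑ k ∈ Finset.range m, ((k : ℝ) + 1)⁻¹ * (P {ω | R ω = k + 1}).toReal := by
          refine Finset.sum_congr rfl fun k _ => ?_
          rw [integral_indicator_const _ (hsets k), smul_eq_mul, mul_comm]; rfl
  rw [hInt]
  -- rewrite as a single integral over γ
  have hsum : ∑ k ∈ Finset.range m, ((k : ℝ) + 1)⁻¹ * (P {ω | R ω = k + 1}).toReal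
      = ∫ u, ∑ k ∈ Finset.range m, ((k : ℝ) + 1)⁻¹ * pmf k u ∂γ := by
    rw [integral_finset_sum _ (fun k _ => ((hpmf_int k).const_mul _))]
    refine Finset.sum_congr rfl fun k hk => ?_
    rw [hPk k hk, ← integral_const_mul]
  rw [hsum]
  -- integrability of (q u)⁻¹
  have hintq : Integrable (fun u => (q u)⁻¹) γ := by
    rw [hqfun]
    exact aux_integrable_inv_q μ₀ ρ hρ.1 hρ.2
  -- pointwise bound
  have hbound : ∀ u, ∑ k ∈ Finset.range m, ((k : ℝ) + 1)⁻¹ * pmf k u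
      ≤ (m : ℝ)⁻¹ * (q u)⁻¹ := by
    intro u
    have := aux_binom_sum m hm (q u) (hq0 u) (hq1 u)
    rwa [mul_inv] at this
  have hm0 : (0:ℝ) < m := by exact_mod_cast hm
  calc ∫ u, ∑ k ∈ Finset.range m, ((k : ℝ) + 1)⁻¹ * pmf k u ∂γ
      ≤ ∫ u, (m : ℝ)⁻¹ * (q u)⁻¹ ∂γ := by
        refine integral_mono (integrable_finset_sum _
          (fun k _ => ((hpmf_int k).const_mul _))) (hintq.const_mul _) hbound
    _ = (m : ℝ)⁻¹ * ∫ u, (q u)⁻¹ ∂γ := integral_const_mul _ _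
    _ ≤ (m : ℝ)⁻¹ * lam⁻¹ := mul_le_mul_of_nonneg_left hint (by positivity)
    _ = 1 / ((m : ℝ) * lam) := by rw [one_div, mul_inv]

end
end
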